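/- Let n ≥ 1. The uniform average over A ∈ 𝒜ₙ of the rank-one projector onto the complex equatorial stabilizer state equals the maximally mixed state: (1/|𝒜ₙ|) Σ_{A ∈ 𝒜ₙ} φ^{eq}_A (φ^{eq}_A)† = (1/2ⁿ)·I, where I is the 2ⁿ×2ⁿ identity matrix and |𝒜ₙ| = 2^{(n²+3n)/2}. -/

import Mathlib

open Finset Matrix

/-- Bit strings of length `n`, with entries viewed as `0/1` integers via `Fin 2`. -/
abbrev Bits (n : ℕ) := Fin n → Fin 2

open Classical in
/-- The index set `𝒜ₙ`: symmetric `n × n` matrices with diagonal entries in `{0,1,2,3}`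
and off-diagonal entries in `{0,1}` (encoded inside `Fin 4`). -/
noncomputable def An (n : ℕ) : Finset (Matrix (Fin n) (Fin n) (Fin 4)) :=
  Finset.univ.filter fun A => (∀ i j, A i j = A j i) ∧ ∀ i j, i ≠ j → (A i j : ℕ) < 2

/-- The quadratic form `xᵀ A x`, computed in `ℤ` (here in `ℕ`, with `0/1` entries of `x`). -/
def quadA {n : ℕ} (A : Matrix (Fin n) (Fin n) (Fin 4)) (x : Bits n) : ℕ :=
  ∑ i, ∑ j, (A i j : ℕ) * (x i : ℕ) * (x j : ℕ)

/-- The complex equatorial stabilizer state `φ^{eq}_A`, with components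
`φ^{eq}_A(x) = 2^{-n/2} i^{xᵀAx}`. -/
noncomputable def phiEq {n : ℕ} (A : Matrix (Fin n) (Fin n) (Fin 4)) (x : Bits n) : ℂ :=
  Complex.I ^ quadA A x / (Real.sqrt (2 ^ n) : ℂ)

/-- The rank-one projector `φ φ†` onto a vector `φ`. -/
noncomputable def outer {ι : Type*} (φ : ι → ℂ) : Matrix ι ι ℂ :=
  Matrix.of fun x y => φ x * (starRingEnd ℂ) (φ y)

section Helpers

variable {n : ℕ}

/-- Set the diagonal entry at `(i0,i0)` to `c`. -/
def setD (A : Matrix (Fin n) (Fin n) (Fin 4)) (i0 : Fin n) (c : Fin 4) :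
    Matrix (Fin n) (Fin n) (Fin 4) :=
  Matrix.of fun i j => if i = i0 ∧ j = i0 then c else A i j

lemma setD_apply (A : Matrix (Fin n) (Fin n) (Fin 4)) (i0 : Fin n) (c : Fin 4) (i j : Fin n) :
    setD A i0 c i j = if i = i0 ∧ j = i0 then c else A i j := rfl

lemma setD_mem {A : Matrix (Fin n) (Fin n) (Fin 4)} {i0 : Fin n} {c : Fin 4}
    (hA : A ∈ An n) : setD A i0 c ∈ An n := by
  simp only [An, Finset.mem_filter, Finset.mem_univ, true_and] at hA ⊢
  obtain ⟨hs, ho⟩ := hA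
  refine ⟨fun i j => ?_, fun i j hij => ?_⟩
  · simp only [setD_apply]
    split_ifs with h1 h2 h2
    · rfl
    · exact absurd ⟨h1.2, h1.1⟩ h2
    · exact absurd ⟨h2.2, h2.1⟩ h1
    · exact hs i j
  · simp only [setD_apply]
    split_ifs with h1
    · exact absurd (h1.1.trans h1.2.symm) hij
    · exact ho i j hij

lemma setD_setD (A : Matrix (Fin n) (Fin n) (Fin 4)) (i0 : Fin n) (c c' : Fin 4) :
    setD (setD A i0 c) i0 c' = setD A i0 c' := by
  ext i j
  simp only [setD_apply]
  split_ifs <;> rfl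

lemma setD_self (A : Matrix (Fin n) (Fin n) (Fin 4)) (i0 : Fin n) :
    setD A i0 (A i0 i0) = A := by
  ext i j
  simp only [setD_apply]
  split_ifs with h
  · rw [h.1, h.2]
  · rfl

lemma setD_diag (A : Matrix (Fin n) (Fin n) (Fin 4)) (i0 : Fin n) (c : Fin 4) :
    setD A i0 c i0 i0 = c := by simp [setD_apply]

lemma quad_setD (B : Matrix (Fin n) (Fin n) (Fin 4)) (i0 : Fin n) (c : Fin 4)
    (hB : B i0 i0 = 0) (x : Bits n) :
    quadA (setD B i0 c) x = quadA B x + (c : ℕ) * (x i0 : ℕ) := by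
  have hx2 : (x i0 : ℕ) * (x i0 : ℕ) = (x i0 : ℕ) := by
    have := (x i0).is_lt; interval_cases h : (x i0 : ℕ) <;> simp
  unfold quadA
  rw [← Finset.sum_product', ← Finset.sum_product', Finset.univ_product_univ]
  rw [← Finset.add_sum_erase _ _ (Finset.mem_univ ((i0, i0) : Fin n × Fin n)),
      ← Finset.add_sum_erase _ _ (Finset.mem_univ ((i0, i0) : Fin n × Fin n))]
  have h1 : ∀ p ∈ (Finset.univ : Finset (Fin n × Fin n)).erase (i0, i0),
      (setD B i0 c p.1 p.2 : ℕ) * (x p.1 : ℕ) * (x p.2 : ℕ)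
        = (B p.1 p.2 : ℕ) * (x p.1 : ℕ) * (x p.2 : ℕ) := by
    intro p hp
    have hne := Finset.ne_of_mem_erase hp
    have : ¬ (p.1 = i0 ∧ p.2 = i0) := by
      intro h; exact hne (Prod.ext h.1 h.2)
    simp [setD_apply, this]
  rw [Finset.sum_congr rfl h1, setD_diag, hB]
  simp only [Fin.val_zero, zero_mul]
  rw [mul_assoc, hx2]
  ring

lemma sum_An_eq (i0 : Fin n) (f : Matrix (Fin n) (Fin n) (Fin 4) → ℂ) :
    ∑ A ∈ An n, f A =
      ∑ B ∈ (An n).filter (fun B => B i0 i0 = 0), ∑ c : Fin 4, f (setD B i0 c) := by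
  rw [← Finset.sum_product']
  symm
  refine Finset.sum_bij' (fun p _ => setD p.1 i0 p.2) (fun A _ => (setD A i0 0, A i0 i0))
    ?_ ?_ ?_ ?_ ?_
  · intro p hp
    simp only [Finset.mem_product, Finset.mem_filter] at hp
    exact setD_mem hp.1.1
  · intro A hA
    simp only [Finset.mem_product, Finset.mem_filter, Finset.mem_univ, and_true, true_and]
    exact ⟨setD_mem hA, setD_diag A i0 0⟩
  · intro p hp
    simp only [Finset.mem_product, Finset.mem_filter] at hp
    have h0 : setD p.1 i0 (0 : Fin 4) = p.1 := by
      conv_rhs => rw [← setD_self p.1 i0, hp.1.2]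
    ext
    · simp [setD_setD, h0]
    · simp [setD_diag]
  · intro A hA
    simp [setD_setD, setD_self]
  · intro p hp
    rfl

lemma geom_I (w : ℂ) (hw : w ^ 2 = -1) : ∑ c : Fin 4, w ^ (c : ℕ) = 0 := by
  rw [Fin.sum_univ_four, show ((0 : Fin 4) : ℕ) = 0 from rfl,
    show ((1 : Fin 4) : ℕ) = 1 from rfl, show ((2 : Fin 4) : ℕ) = 2 from rfl,
    show ((3 : Fin 4) : ℕ) = 3 from rfl]
  have h3 : w ^ 3 = w ^ 2 * w := by ring
  rw [pow_zero, pow_one, h3, hw]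
  ring

lemma S_ne (x y : Bits n) (h : x ≠ y) :
    ∑ A ∈ An n, (Complex.I ^ quadA A x * (starRingEnd ℂ) (Complex.I ^ quadA A y)) = 0 := by
  obtain ⟨i0, hi0⟩ := Function.ne_iff.mp h
  rw [sum_An_eq i0]
  apply Finset.sum_eq_zero
  intro B hB
  simp only [Finset.mem_filter] at hB
  have hB0 : B i0 i0 = 0 := hB.2
  have key : ∀ c : Fin 4,
      Complex.I ^ quadA (setD B i0 c) x * (starRingEnd ℂ) (Complex.I ^ quadA (setD B i0 c) y)
      = (Complex.I ^ quadA B x * (starRingEnd ℂ) (Complex.I ^ quadA B y)) *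
        ((Complex.I ^ (x i0 : ℕ) * (-Complex.I) ^ (y i0 : ℕ)) ^ (c : ℕ)) := by
    intro c
    rw [quad_setD B i0 c hB0 x, quad_setD B i0 c hB0 y, map_pow, map_pow, Complex.conj_I,
      pow_add, pow_add, mul_comm (c : ℕ) ((x i0 : ℕ)), mul_comm (c : ℕ) ((y i0 : ℕ)),
      pow_mul, pow_mul]
    ring
  rw [Finset.sum_congr rfl (fun c _ => key c), ← Finset.mul_sum]
  have hw : (Complex.I ^ (x i0 : ℕ) * (-Complex.I) ^ (y i0 : ℕ)) ^ 2 = -1 := by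
    have hx := (x i0).is_lt
    have hy := (y i0).is_lt
    have hne : (x i0 : ℕ) ≠ (y i0 : ℕ) := fun hh => hi0 (Fin.ext hh)
    interval_cases h1 : (x i0 : ℕ) <;> interval_cases h2 : (y i0 : ℕ) <;>
      simp_all [Complex.I_sq]
  rw [geom_I _ hw, mul_zero]

lemma S_eq (x : Bits n) :
    ∑ A ∈ An n, (Complex.I ^ quadA A x * (starRingEnd ℂ) (Complex.I ^ quadA A x))
      = ((An n).card : ℂ) := by
  rw [Finset.sum_congr rfl (fun A _ => ?_), Finset.sum_const, nsmul_eq_mul, mul_one]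
  rw [Complex.mul_conj, map_pow, Complex.normSq_I, one_pow, Complex.ofReal_one]

lemma phi_mul (A : Matrix (Fin n) (Fin n) (Fin 4)) (x y : Bits n) :
    phiEq A x * (starRingEnd ℂ) (phiEq A y) =
      (Complex.I ^ quadA A x * (starRingEnd ℂ) (Complex.I ^ quadA A y)) / ((2 : ℂ) ^ n) := by
  unfold phiEq
  rw [map_div₀, div_mul_div_comm, Complex.conj_ofReal]
  congr 1
  rw [← Complex.ofReal_mul, Real.mul_self_sqrt (by positivity)]
  norm_cast

lemma card_An_pos : 0 < (An n).card := by
  apply Finset.card_pos.mpr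
  exact ⟨0, by simp [An]⟩

end Helpers

/-- the uniform average over `A ∈ 𝒜ₙ` of the rank-one projector onto
`φ^{eq}_A` is the maximally mixed state `(1/2ⁿ)·I`. -/
theorem espovm_first_moment (n : ℕ) (hn : 1 ≤ n) :
    (((An n).card : ℂ))⁻¹ • ∑ A ∈ An n, outer (phiEq A) =
      ((2 : ℂ) ^ n)⁻¹ • (1 : Matrix (Bits n) (Bits n) ℂ) := by
  ext x y
  simp only [Matrix.smul_apply, Matrix.sum_apply, outer, Matrix.of_apply, smul_eq_mul,
    Matrix.one_apply]
  rw [Finset.sum_congr rfl (fun A _ => phi_mul A x y), ← Finset.sum_div]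
  by_cases hxy : x = y
  · subst hxy
    rw [S_eq x, if_pos rfl, mul_one]
    have hc : ((An n).card : ℂ) ≠ 0 := Nat.cast_ne_zero.mpr card_An_pos.ne'
    field_simp
  · rw [S_ne x y hxy, if_neg hxy, mul_zero, zero_div, mul_zero]
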